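/- Let D=(V,A) be a digraph whose arc set is partitioned into two branchings B₁ and B₂, and let s ∈ R(B₁) \ R(B₂). Then there exist branchings B₁', B₂' partitioning A such that either R(B₁')=R(B₁)\{s} and R(B₂')=R(B₂)∪{s}, or there exists t ∈ R(B₂)\R(B₁) with R(B₁')=(R(B₁)\{s})∪{t} and R(B₂')=(R(B₂)∪{s})\{t}. -/

import Mathlib

open scoped Classical
open Finset

variable {V : Type*} [Fintype V] [DecidableEq V]

/-- A closed directed walk (cycle) using arcs of `B`. -/
def HasCycle (B : Finset (V × V)) : Prop :=
  ∃ (n : ℕ) (f : Fin (n + 1) → V), ∀ i : Fin (n + 1), (f i, f (i + 1)) ∈ B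

/-- `B` is a branching in the digraph with arc set `A`. -/
def IsBranching (A B : Finset (V × V)) : Prop :=
  B ⊆ A ∧ (∀ v : V, (B.filter (fun a => a.2 = v)).card ≤ 1) ∧ ¬ HasCycle B

/-- `R(B)`: the set of vertices with no arc of `B` entering them. -/
def rootSet (B : Finset (V × V)) : Finset V :=
  Finset.univ.filter (fun v => ∀ a ∈ B, a.2 ≠ v)

/-- Reachability via directed paths using arcs of `A`. -/
def Reaches (A : Finset (V × V)) (u v : V) : Prop :=
  Relation.ReflTransGen (fun x y => (x, y) ∈ A) u v

/-- A source component: a strongly connected component with no entering arc. -/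
def IsSourceComponent (A : Finset (V × V)) (K : Set V) : Prop :=
  (∃ v : V, K = {u : V | Reaches A u v ∧ Reaches A v u}) ∧
    ∀ a ∈ A, a.2 ∈ K → a.1 ∈ K
set_option linter.unusedSectionVars false
set_option maxHeartbeats 1000000

namespace BrEx

def indeg (B : Finset (V × V)) (v : V) : ℕ := (B.filter (fun a => a.2 = v)).card

def cutIn (A : Finset (V × V)) (U : Finset V) : ℕ :=
  (A.filter (fun a => a.2 ∈ U ∧ a.1 ∉ U)).card

lemma mem_rootSet {B : Finset (V × V)} {v : V} : v ∈ rootSet B ↔ ∀ a ∈ B, a.2 ≠ v := by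
  simp [rootSet]

lemma rootSet_empty : rootSet (∅ : Finset (V × V)) = univ := by
  simp [rootSet]

lemma hasCycle_empty : ¬ HasCycle (∅ : Finset (V × V)) := by
  rintro ⟨n, f, hf⟩
  exact absurd (hf 0) (Finset.notMem_empty _)

lemma indeg_eq_zero_iff {B : Finset (V × V)} {v : V} : indeg B v = 0 ↔ v ∈ rootSet B := by
  simp [indeg, rootSet, Finset.card_eq_zero, Finset.filter_eq_empty_iff]

lemma rootSet_insert (e : V × V) (B : Finset (V × V)) :
    rootSet (insert e B) = (rootSet B).erase e.2 := by
  ext v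
  simp only [rootSet, mem_filter, mem_univ, true_and, mem_erase, Finset.mem_insert]
  constructor
  · intro h
    exact ⟨Ne.symm (h e (Or.inl rfl)), fun a ha => h a (Or.inr ha)⟩
  · rintro ⟨hne, h⟩ a (rfl | ha)
    · exact fun hh => hne hh.symm
    · exact h a ha

lemma eq_of_reach_no_in {B : Finset (V × V)} {x w : V} (hx : ∀ a ∈ B, a.2 ≠ x)
    (h : Relation.ReflTransGen (fun p q : V => (p, q) ∈ B) w x) : w = x := by
  rcases Relation.ReflTransGen.cases_tail h with h' | ⟨c, _, hc⟩
  · exact h'.symm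
  · exact absurd rfl (hx (c, x) hc)

lemma hasCycle_of_pred {B : Finset (V × V)} {U : Finset V} (hU : U.Nonempty)
    (hpred : ∀ v ∈ U, ∃ u ∈ U, (u, v) ∈ B) : HasCycle B := by
  obtain ⟨v₀, hv₀⟩ := hU
  have hstep : ∀ v : {v // v ∈ U}, ∃ u : {v // v ∈ U}, (u.1, v.1) ∈ B := by
    intro v
    obtain ⟨u, hu, hb⟩ := hpred v.1 v.2
    exact ⟨⟨u, hu⟩, hb⟩
  choose F hF using hstep
  set g : ℕ → {v // v ∈ U} := fun n => F^[n] ⟨v₀, hv₀⟩ with hg_def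
  have hg : ∀ n, ((g (n + 1)).1, (g n).1) ∈ B := by
    intro n
    have h1 : g (n + 1) = F (g n) := Function.iterate_succ_apply' F n _
    rw [h1]
    exact hF (g n)
  obtain ⟨i0, j0, hne, heq0⟩ := Finite.exists_ne_map_eq_of_infinite g
  obtain ⟨i, j, hij, heq⟩ : ∃ i j, i < j ∧ g i = g j := by
    rcases lt_or_gt_of_ne hne with h | h
    · exact ⟨i0, j0, h, heq0⟩
    · exact ⟨j0, i0, h, heq0.symm⟩
  refine ⟨j - i - 1, fun l => (g (j - l.1)).1, ?_⟩
  intro l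
  rcases eq_or_ne l (Fin.last _) with hl | hl
  · have hv : (l : ℕ) = j - i - 1 := by rw [hl]; rfl
    have hv1 : ((l + 1 : Fin _) : ℕ) = 0 := by rw [hl, Fin.last_add_one]; rfl
    show ((g (j - l.1)).1, (g (j - (l + 1 : Fin _).1)).1) ∈ B
    rw [hv, hv1]
    have e1 : j - (j - i - 1) = i + 1 := by omega
    have e2 : j - 0 = j := by omega
    rw [e1, e2, ← heq]
    exact hg i
  · have hlt : l.1 < j - i - 1 := Fin.val_lt_last hl
    have h1 : (l + 1 : Fin _).1 = l.1 + 1 := by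
      rw [Fin.val_add_one]
      simp [hl]
    show ((g (j - l.1)).1, (g (j - (l + 1 : Fin _).1)).1) ∈ B
    rw [h1]
    have h2 : j - (l.1 + 1) = j - l.1 - 1 := by omega
    have h3 : j - l.1 - 1 + 1 = j - l.1 := by omega
    rw [h2]
    have harc := hg (j - l.1 - 1)
    rw [h3] at harc
    exact harc

open Fin.CommRing in
lemma reach_around {B : Finset (V × V)} {n : ℕ} {f : Fin (n + 1) → V}
    (hf : ∀ i : Fin (n + 1), (f i, f (i + 1)) ∈ B) (j : Fin (n + 1)) (k : ℕ) :
    Relation.ReflTransGen (fun x y : V => (x, y) ∈ B) (f j) (f (j + (k : Fin (n + 1)))) := by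
  induction k with
  | zero => simpa using Relation.ReflTransGen.refl
  | succ k ih =>
      have : ((k + 1 : ℕ) : Fin (n + 1)) = (k : Fin (n + 1)) + 1 := by push_cast; ring
      rw [this, ← add_assoc]
      exact ih.tail (hf (j + (k : Fin (n + 1))))

open Fin.CommRing in
lemma noCycle_insert {B : Finset (V × V)} {e : V × V} (hB : ¬ HasCycle B)
    (hx : ∀ a ∈ insert e B, a.2 ≠ e.1) : ¬ HasCycle (insert e B) := by
  rintro ⟨n, f, hf⟩
  by_cases huse : ∃ i, (f i, f (i + 1)) = e
  · obtain ⟨i, hi⟩ := huse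
    have hfi : f i = e.1 := congrArg Prod.fst hi
    have hfi1 : f (i + 1) = e.2 := congrArg Prod.snd hi
    have hwalk := reach_around hf (i + 1) n
    have hend : i + 1 + (n : Fin (n + 1)) = i := by
      have h0 : (n : Fin (n + 1)) + 1 = 0 := by
        have := Fin.natCast_self (n + 1)
        push_cast at this
        exact this
      have : i + 1 + (n : Fin (n + 1)) = i + ((n : Fin (n + 1)) + 1) := by ring
      rw [this, h0, add_zero]
    rw [hend, hfi, hfi1] at hwalk
    exact absurd (eq_of_reach_no_in hx hwalk) (hx e (Finset.mem_insert_self e B))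
  · push_neg at huse
    refine hB ⟨n, f, fun i => ?_⟩
    rcases Finset.mem_insert.1 (hf i) with h | h
    · exact absurd h (huse i)
    · exact h

def Closed (A : Finset (V × V)) (U : Finset V) : Prop :=
  ∀ a ∈ A, a.2 ∈ U → a.1 ∈ U

lemma cutIn_eq_zero_iff {A : Finset (V × V)} {U : Finset V} :
    cutIn A U = 0 ↔ Closed A U := by
  simp only [cutIn, Finset.card_eq_zero, Finset.filter_eq_empty_iff, Closed, not_and, not_not]

lemma cutIn_submodular (A : Finset (V × V)) (U U' : Finset V) :
    cutIn A (U ∩ U') + cutIn A (U ∪ U') ≤ cutIn A U + cutIn A U' := by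
  simp only [cutIn, Finset.card_filter]
  rw [← Finset.sum_add_distrib, ← Finset.sum_add_distrib]
  apply Finset.sum_le_sum
  intro a _
  by_cases h1 : a.2 ∈ U <;> by_cases h2 : a.2 ∈ U' <;> by_cases h3 : a.1 ∈ U <;>
    by_cases h4 : a.1 ∈ U' <;>
    simp [Finset.mem_inter, Finset.mem_union, h1, h2, h3, h4]

def hv (A : Finset (V × V)) (R₂ : Finset V) (U : Finset V) : ℕ :=
  cutIn A U + (if (R₂ ∩ U).Nonempty then 1 else 0)

lemma hv_submodular (A : Finset (V × V)) (R₂ U U' : Finset V) :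
    hv A R₂ (U ∩ U') + hv A R₂ (U ∪ U') ≤ hv A R₂ U + hv A R₂ U' := by
  have h1 := cutIn_submodular A U U'
  have himp1 : (R₂ ∩ (U ∩ U')).Nonempty → (R₂ ∩ U).Nonempty := fun ⟨x, hx⟩ =>
    ⟨x, by simp only [Finset.mem_inter] at *; tauto⟩
  have himp2 : (R₂ ∩ (U ∩ U')).Nonempty → (R₂ ∩ U').Nonempty := fun ⟨x, hx⟩ =>
    ⟨x, by simp only [Finset.mem_inter] at *; tauto⟩
  have himp3 : (R₂ ∩ (U ∪ U')).Nonempty → (R₂ ∩ U).Nonempty ∨ (R₂ ∩ U').Nonempty := by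
    rintro ⟨x, hx⟩
    simp only [Finset.mem_inter, Finset.mem_union] at hx
    rcases hx.2 with h | h
    · exact Or.inl ⟨x, Finset.mem_inter.2 ⟨hx.1, h⟩⟩
    · exact Or.inr ⟨x, Finset.mem_inter.2 ⟨hx.1, h⟩⟩
  have h2 : (if (R₂ ∩ (U ∩ U')).Nonempty then 1 else 0) +
      (if (R₂ ∩ (U ∪ U')).Nonempty then 1 else 0) ≤
      (if (R₂ ∩ U).Nonempty then 1 else 0) + (if (R₂ ∩ U').Nonempty then (1:ℕ) else 0) := by
    by_cases hI : (R₂ ∩ (U ∩ U')).Nonempty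
    · have hU : (R₂ ∩ U).Nonempty := himp1 hI
      have hU' : (R₂ ∩ U').Nonempty := himp2 hI
      have hUu : (R₂ ∩ (U ∪ U')).Nonempty := by
        obtain ⟨x, hx⟩ := hU
        simp only [Finset.mem_inter] at hx
        exact ⟨x, by simp [Finset.mem_inter, Finset.mem_union, hx.1, hx.2]⟩
      simp [hI, hU, hU', hUu]
    · by_cases hUu : (R₂ ∩ (U ∪ U')).Nonempty
      · rcases himp3 hUu with h | h
        · simp only [hI, if_neg, not_false_iff, hUu, if_pos, h]
          split <;> omega
        · simp only [hI, if_neg, not_false_iff, hUu, if_pos, h]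
          split <;> omega
      · simp only [hI, hUu, if_neg, not_false_iff]
        split <;> split <;> omega
  unfold hv
  omega

def Deg2 (A : Finset (V × V)) (R₁ R₂ : Finset V) : Prop :=
  ∀ v : V, indeg A v + (if v ∈ R₁ then 1 else 0) + (if v ∈ R₂ then 1 else 0) = 2

def Cut2 (A : Finset (V × V)) (R₁ R₂ : Finset V) : Prop :=
  ∀ U : Finset V, U.Nonempty →
    (if (R₁ ∩ U).Nonempty then 0 else 1) + (if (R₂ ∩ U).Nonempty then 0 else 1) ≤ cutIn A U

def Ex2 (A : Finset (V × V)) (R₁ R₂ : Finset V) : Prop :=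
  ∃ B₁ B₂ : Finset (V × V), IsBranching A B₁ ∧ IsBranching A B₂ ∧ B₁ ∪ B₂ = A ∧
    Disjoint B₁ B₂ ∧ rootSet B₁ = R₁ ∧ rootSet B₂ = R₂

lemma Deg2.comm {A : Finset (V × V)} {R₁ R₂ : Finset V} (h : Deg2 A R₁ R₂) : Deg2 A R₂ R₁ := by
  intro v; have := h v; omega

lemma Cut2.comm {A : Finset (V × V)} {R₁ R₂ : Finset V} (h : Cut2 A R₁ R₂) : Cut2 A R₂ R₁ := by
  intro U hU; have := h U hU; omega

lemma Ex2.comm {A : Finset (V × V)} {R₁ R₂ : Finset V} (h : Ex2 A R₂ R₁) : Ex2 A R₁ R₂ := by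
  obtain ⟨B₁, B₂, hb1, hb2, hun, hdj, hr1, hr2⟩ := h
  exact ⟨B₂, B₁, hb2, hb1, by rw [Finset.union_comm]; exact hun, hdj.symm, hr2, hr1⟩

lemma hv_ge_one {A : Finset (V × V)} {R₁ R₂ : Finset V} (hcut : Cut2 A R₁ R₂)
    {U : Finset V} (hU : U.Nonempty) : 1 ≤ hv A R₂ U := by
  have := hcut U hU
  unfold hv
  split_ifs at * <;> omega

def Tight (A : Finset (V × V)) (R₂ : Finset V) (U : Finset V) : Prop :=
  U.Nonempty ∧ hv A R₂ U = 1

lemma tight_inter {A : Finset (V × V)} {R₁ R₂ : Finset V} (hcut : Cut2 A R₁ R₂)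
    {U U' : Finset V} (hU : Tight A R₂ U) (hU' : Tight A R₂ U')
    (hI : (U ∩ U').Nonempty) : Tight A R₂ (U ∩ U') := by
  have hsub := hv_submodular A R₂ U U'
  have h1 := hv_ge_one hcut hI
  have h2 : 1 ≤ hv A R₂ (U ∪ U') := hv_ge_one hcut (hU.1.mono Finset.subset_union_left)
  have h3 := hU.2
  have h4 := hU'.2
  exact ⟨hI, by omega⟩

lemma indeg_erase_self {A : Finset (V × V)} {a : V × V} (ha : a ∈ A) :
    indeg (A.erase a) a.2 + 1 = indeg A a.2 := by
  unfold indeg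
  rw [Finset.filter_erase, Finset.card_erase_of_mem (by simp [ha])]
  have : 0 < (A.filter (fun b => b.2 = a.2)).card := Finset.card_pos.2 ⟨a, by simp [ha]⟩
  omega

lemma indeg_erase_of_ne {A : Finset (V × V)} {a : V × V} {v : V} (h : a.2 ≠ v) :
    indeg (A.erase a) v = indeg A v := by
  unfold indeg
  rw [Finset.filter_erase, Finset.erase_eq_of_notMem (by simp [h])]

lemma cutIn_erase_mem {A : Finset (V × V)} {a : V × V} {U : Finset V} (ha : a ∈ A)
    (h : a.2 ∈ U ∧ a.1 ∉ U) : cutIn (A.erase a) U + 1 = cutIn A U := by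
  unfold cutIn
  rw [Finset.filter_erase, Finset.card_erase_of_mem (by simp [ha, h.1, h.2])]
  have : 0 < (A.filter (fun b => b.2 ∈ U ∧ b.1 ∉ U)).card :=
    Finset.card_pos.2 ⟨a, by simp [ha, h.1, h.2]⟩
  omega

lemma cutIn_erase_not {A : Finset (V × V)} {a : V × V} {U : Finset V}
    (h : ¬ (a.2 ∈ U ∧ a.1 ∉ U)) : cutIn (A.erase a) U = cutIn A U := by
  unfold cutIn
  rw [Finset.filter_erase, Finset.erase_eq_of_notMem (by simp only [Finset.mem_filter]; tauto)]

lemma E2_base {R₁ R₂ : Finset V} (hdeg : Deg2 (∅ : Finset (V × V)) R₁ R₂) : Ex2 ∅ R₁ R₂ := by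
  have hmem : ∀ v : V, v ∈ R₁ ∧ v ∈ R₂ := by
    intro v
    have := hdeg v
    have h0 : indeg (∅ : Finset (V × V)) v = 0 := by simp [indeg]
    rw [h0] at this
    constructor
    · by_contra h; rw [if_neg h] at this; split_ifs at this <;> omega
    · by_contra h; rw [if_neg h] at this; split_ifs at this <;> omega
  have h1 : R₁ = univ := by ext v; simp [(hmem v).1]
  have h2 : R₂ = univ := by ext v; simp [(hmem v).2]
  refine ⟨∅, ∅, ⟨Finset.Subset.refl _, by simp, hasCycle_empty⟩,
    ⟨Finset.Subset.refl _, by simp, hasCycle_empty⟩, by simp, by simp, ?_, ?_⟩ <;>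
    rw [rootSet_empty]
  · exact h1.symm
  · exact h2.symm

lemma sideStep {A : Finset (V × V)} {R₁ R₂ : Finset V}
    (hdeg : Deg2 A R₁ R₂) (hcut : Cut2 A R₁ R₂) (y₀ : V) (hy₀ : y₀ ∉ R₁)
    (IH : ∀ A' : Finset (V × V), ∀ R₁' R₂' : Finset V, A'.card < A.card →
      Deg2 A' R₁' R₂' → Cut2 A' R₁' R₂' → Ex2 A' R₁' R₂') :
    Ex2 A R₁ R₂ := by
  have huniv_ne : (Finset.univ : Finset V).Nonempty := ⟨y₀, Finset.mem_univ _⟩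
  have hcut_univ := hcut univ huniv_ne
  have hcutIn_univ : cutIn A univ = 0 := by
    simp [cutIn, Finset.filter_eq_empty_iff]
  have hR₂ : (R₂ ∩ univ).Nonempty := by
    by_contra h
    rw [hcutIn_univ, if_neg h] at hcut_univ
    split_ifs at hcut_univ <;> omega
  have htuniv : Tight A R₂ univ := ⟨huniv_ne, by unfold hv; rw [hcutIn_univ, if_pos hR₂]⟩
  set Fam : Finset (Finset V) :=
    Finset.univ.filter (fun U => Tight A R₂ U ∧ (U \ R₁).Nonempty) with hFam
  have hFam_ne : Fam.Nonempty := by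
    refine ⟨univ, ?_⟩
    simp only [hFam, Finset.mem_filter, Finset.mem_univ, true_and]
    exact ⟨htuniv, ⟨y₀, by simp [hy₀]⟩⟩
  obtain ⟨M, hM_mem, hM_min⟩ := Finset.exists_min_image Fam Finset.card hFam_ne
  simp only [hFam, Finset.mem_filter, Finset.mem_univ, true_and] at hM_mem
  obtain ⟨hM_t, hM_ne⟩ := hM_mem
  have harc : ∃ a ∈ A, a.1 ∈ M ∧ a.1 ∈ R₁ ∧ a.2 ∈ M ∧ a.2 ∉ R₁ := by
    by_contra hno
    push_neg at hno
    set N := M \ R₁ with hN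
    have hNM : N ⊆ M := Finset.sdiff_subset
    have hR₁N : ¬ (R₁ ∩ N).Nonempty := by
      rintro ⟨x, hx⟩
      simp only [hN, Finset.mem_inter, Finset.mem_sdiff] at hx
      exact hx.2.2 hx.1
    have hcutN := hcut N hM_ne
    have hsub : A.filter (fun b => b.2 ∈ N ∧ b.1 ∉ N) ⊆
        A.filter (fun b => b.2 ∈ M ∧ b.1 ∉ M) := by
      intro b hb
      simp only [Finset.mem_filter] at hb ⊢
      refine ⟨hb.1, hNM hb.2.1, ?_⟩
      intro hbM
      by_cases h1 : b.1 ∈ R₁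
      · have h3 : b.2 ∉ R₁ := by
          have := hb.2.1; simp only [hN, Finset.mem_sdiff] at this; exact this.2
        exact h3 (hno b hb.1 hbM h1 (hNM hb.2.1))
      · exact hb.2.2 (by simp [hN, Finset.mem_sdiff, hbM, h1])
    have hle : cutIn A N ≤ cutIn A M := Finset.card_le_card hsub
    have hMt2 := hM_t.2
    unfold hv at hMt2
    by_cases hRM : (R₂ ∩ M).Nonempty
    · rw [if_pos hRM] at hMt2
      rw [if_neg hR₁N] at hcutN
      split_ifs at hcutN <;> omega
    · rw [if_neg hRM] at hMt2
      have hRN : ¬ (R₂ ∩ N).Nonempty := by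
        rintro ⟨x, hx⟩
        exact hRM ⟨x, Finset.mem_inter.2 ⟨(Finset.mem_inter.1 hx).1, hNM (Finset.mem_inter.1 hx).2⟩⟩
      rw [if_neg hR₁N, if_neg hRN] at hcutN
      omega
  obtain ⟨a, haA, ha1M, ha1R, ha2M, ha2R⟩ := harc
  have hcard' : (A.erase a).card < A.card := Finset.card_erase_lt_of_mem haA
  have hdeg' : Deg2 (A.erase a) (insert a.2 R₁) R₂ := by
    intro v
    by_cases hvy : a.2 = v
    · subst hvy
      have h1 := indeg_erase_self haA
      have h2 := hdeg a.2
      rw [if_neg ha2R] at h2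
      rw [if_pos (Finset.mem_insert_self _ _)]
      omega
    · rw [indeg_erase_of_ne hvy]
      have h2 := hdeg v
      have : (v ∈ insert a.2 R₁) ↔ (v ∈ R₁) := by
        simp only [Finset.mem_insert]
        exact or_iff_right (fun h => hvy h.symm)
      rw [if_congr this rfl rfl]
      exact h2
  have hcut' : Cut2 (A.erase a) (insert a.2 R₁) R₂ := by
    intro U hU
    by_cases hsep : a.2 ∈ U ∧ a.1 ∉ U
    · have h1 : ((insert a.2 R₁) ∩ U).Nonempty :=
        ⟨a.2, Finset.mem_inter.2 ⟨Finset.mem_insert_self _ _, hsep.1⟩⟩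
      rw [if_pos h1]
      have hnt : ¬ Tight A R₂ U := by
        intro ht
        have hIne : (U ∩ M).Nonempty := ⟨a.2, Finset.mem_inter.2 ⟨hsep.1, ha2M⟩⟩
        have htI := tight_inter hcut ht hM_t hIne
        have hmem : U ∩ M ∈ Fam := by
          simp only [hFam, Finset.mem_filter, Finset.mem_univ, true_and]
          exact ⟨htI, ⟨a.2, by simp [Finset.mem_sdiff, hsep.1, ha2M, ha2R]⟩⟩
        have hcardle := hM_min _ hmem
        have hUM : U ∩ M = M := Finset.eq_of_subset_of_card_le Finset.inter_subset_right hcardle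
        have : a.1 ∈ U := by
          have : a.1 ∈ U ∩ M := hUM.symm ▸ ha1M
          exact (Finset.mem_inter.1 this).1
        exact hsep.2 this
      have hge1 := hv_ge_one hcut hU
      have hne1 : hv A R₂ U ≠ 1 := fun h => hnt ⟨hU, h⟩
      have hv2 : 2 ≤ hv A R₂ U := by omega
      have hcc : cutIn (A.erase a) U + 1 = cutIn A U := cutIn_erase_mem haA hsep
      unfold hv at hv2
      split_ifs at hv2 ⊢ <;> omega
    · have hcc : cutIn (A.erase a) U = cutIn A U := cutIn_erase_not hsep
      have hold := hcut U hU
      have hmono : (R₁ ∩ U).Nonempty → ((insert a.2 R₁) ∩ U).Nonempty := by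
        rintro ⟨x, hx⟩
        exact ⟨x, Finset.mem_inter.2
          ⟨Finset.mem_insert_of_mem (Finset.mem_inter.1 hx).1, (Finset.mem_inter.1 hx).2⟩⟩
      rw [hcc]
      by_cases hR1U : (R₁ ∩ U).Nonempty
      · rw [if_pos (hmono hR1U)]
        rw [if_pos hR1U] at hold
        exact hold
      · rw [if_neg hR1U] at hold
        split_ifs at hold ⊢ <;> omega
  obtain ⟨B₁'', B₂'', hb1, hb2, hun, hdj, hr1, hr2⟩ :=
    IH (A.erase a) (insert a.2 R₁) R₂ hcard' hdeg' hcut'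
  have hB1sub : B₁'' ⊆ A.erase a := hb1.1
  have haB1 : a ∉ B₁'' := fun h => Finset.notMem_erase a A (hB1sub h)
  have hy_root : a.2 ∈ rootSet B₁'' := hr1.symm ▸ Finset.mem_insert_self _ _
  have hx_root : a.1 ∈ rootSet B₁'' := hr1.symm ▸ Finset.mem_insert_of_mem ha1R
  refine ⟨insert a B₁'', B₂'', ⟨?_, ?_, ?_⟩,
    ⟨hb2.1.trans (Finset.erase_subset _ _), hb2.2.1, hb2.2.2⟩, ?_, ?_, ?_, hr2⟩
  · exact Finset.insert_subset haA (hB1sub.trans (Finset.erase_subset _ _))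
  · intro v
    by_cases hvy : a.2 = v
    · subst hvy
      have h0 : indeg B₁'' a.2 = 0 := indeg_eq_zero_iff.2 hy_root
      have : indeg (insert a B₁'') a.2 = indeg B₁'' a.2 + 1 := by
        unfold indeg
        rw [Finset.filter_insert, if_pos rfl, Finset.card_insert_of_notMem (by simp [haB1])]
      show indeg (insert a B₁'') a.2 ≤ 1
      omega
    · show indeg (insert a B₁'') v ≤ 1
      have : indeg (insert a B₁'') v = indeg B₁'' v := by
        unfold indeg
        rw [Finset.filter_insert, if_neg hvy]
      rw [this]
      exact hb1.2.1 v
  · refine noCycle_insert hb1.2.2 ?_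
    intro b hb
    rcases Finset.mem_insert.1 hb with rfl | hbB
    · intro h
      exact ha2R (h ▸ ha1R)
    · exact mem_rootSet.1 hx_root b hbB
  · rw [Finset.insert_union, hun, Finset.insert_erase haA]
  · exact Finset.disjoint_insert_left.2
      ⟨fun h => Finset.notMem_erase a A (hb2.1 h), hdj⟩
  · rw [rootSet_insert, hr1, Finset.erase_insert ha2R]

lemma E2 : ∀ (N : ℕ) (A : Finset (V × V)) (R₁ R₂ : Finset V), A.card ≤ N →
    Deg2 A R₁ R₂ → Cut2 A R₁ R₂ → Ex2 A R₁ R₂ := by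
  intro N
  induction N with
  | zero =>
      intro A R₁ R₂ hc hdeg _
      have : A = ∅ := Finset.card_eq_zero.1 (Nat.le_zero.1 hc)
      subst this
      exact E2_base hdeg
  | succ N IH =>
      intro A R₁ R₂ hc hdeg hcut
      rcases Finset.eq_empty_or_nonempty A with rfl | ⟨a₀, ha₀⟩
      · exact E2_base hdeg
      · have hIH : ∀ (A' : Finset (V × V)) (R₁' R₂' : Finset V), A'.card < A.card →
            Deg2 A' R₁' R₂' → Cut2 A' R₁' R₂' → Ex2 A' R₁' R₂' :=
          fun A' R₁' R₂' hlt hd hcu => IH A' R₁' R₂' (by omega) hd hcu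
        have hd := hdeg a₀.2
        have hind : 1 ≤ indeg A a₀.2 := Finset.card_pos.2 ⟨a₀, by simp [ha₀]⟩
        by_cases h1 : a₀.2 ∈ R₁
        · have h2 : a₀.2 ∉ R₂ := by
            intro h
            rw [if_pos h1, if_pos h] at hd
            omega
          exact Ex2.comm (sideStep hdeg.comm hcut.comm a₀.2 h2
            (fun A' R₁' R₂' hlt hdd hcc => hIH A' R₁' R₂' hlt hdd hcc))
        · exact sideStep hdeg hcut a₀.2 h1 hIH

lemma branching_indeg {A B : Finset (V × V)} (h : IsBranching A B) (v : V) :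
    indeg B v + (if v ∈ rootSet B then 1 else 0) = 1 := by
  by_cases hr : v ∈ rootSet B
  · rw [if_pos hr, indeg_eq_zero_iff.2 hr]
  · rw [if_neg hr]
    have h1 : indeg B v ≤ 1 := h.2.1 v
    have h2 : indeg B v ≠ 0 := fun h0 => hr (indeg_eq_zero_iff.1 h0)
    omega

lemma indeg_union {B₁ B₂ : Finset (V × V)} (hd : Disjoint B₁ B₂) (v : V) :
    indeg (B₁ ∪ B₂) v = indeg B₁ v + indeg B₂ v := by
  unfold indeg
  rw [Finset.filter_union, Finset.card_union_of_disjoint (Finset.disjoint_filter_filter hd)]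

lemma cutIn_union {B₁ B₂ : Finset (V × V)} (hd : Disjoint B₁ B₂) (U : Finset V) :
    cutIn (B₁ ∪ B₂) U = cutIn B₁ U + cutIn B₂ U := by
  unfold cutIn
  rw [Finset.filter_union, Finset.card_union_of_disjoint (Finset.disjoint_filter_filter hd)]

lemma branching_cut {A B : Finset (V × V)} (h : IsBranching A B) {U : Finset V}
    (hU : U.Nonempty) (hroot : ¬ (rootSet B ∩ U).Nonempty) : 1 ≤ cutIn B U := by
  by_contra h0
  push_neg at h0
  have hcl : Closed B U := cutIn_eq_zero_iff.1 (by omega)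
  refine h.2.2 (hasCycle_of_pred hU ?_)
  intro v hv
  have hvroot : v ∉ rootSet B := fun hr => hroot ⟨v, Finset.mem_inter.2 ⟨hr, hv⟩⟩
  rw [mem_rootSet] at hvroot
  push_neg at hvroot
  obtain ⟨a, haB, ha2⟩ := hvroot
  exact ⟨a.1, hcl a haB (ha2 ▸ hv), by rw [← ha2]; exact haB⟩

lemma reach_closed {A : Finset (V × V)} {U : Finset V} (hUc : Closed A U) {z w : V}
    (hz : z ∈ U) (h : Reaches A w z) : w ∈ U := by
  induction h using Relation.ReflTransGen.head_induction_on with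
  | refl => exact hz
  | head hab _ ih => exact hUc _ hab ih

end BrEx


open BrEx in
theorem branching_root_exchange
    (A B₁ B₂ : Finset (V × V)) (s : V)
    (h₁ : IsBranching A B₁) (h₂ : IsBranching A B₂)
    (hpart : B₁ ∪ B₂ = A) (hdisj : Disjoint B₁ B₂)
    (hs : s ∈ rootSet B₁ \ rootSet B₂) :
    ∃ B₁' B₂' : Finset (V × V),
      IsBranching A B₁' ∧ IsBranching A B₂' ∧ B₁' ∪ B₂' = A ∧ Disjoint B₁' B₂' ∧
      ((rootSet B₁' = rootSet B₁ \ {s} ∧ rootSet B₂' = rootSet B₂ ∪ {s}) ∨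
        ∃ t ∈ rootSet B₂ \ rootSet B₁,
          rootSet B₁' = (rootSet B₁ \ {s}) ∪ {t} ∧
          rootSet B₂' = (rootSet B₂ ∪ {s}) \ {t}) := by
  classical
  obtain ⟨hsR₁, hsR₂⟩ := Finset.mem_sdiff.1 hs
  set R₁ := rootSet B₁ with hR₁def
  set R₂ := rootSet B₂ with hR₂def
  have hdeg : Deg2 A R₁ R₂ := by
    intro v
    have e1 := branching_indeg h₁ v
    have e2 := branching_indeg h₂ v
    have e3 : indeg A v = indeg B₁ v + indeg B₂ v := by
      rw [← hpart]; exact indeg_union hdisj v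
    rw [← hR₁def] at e1
    rw [← hR₂def] at e2
    split_ifs at e1 e2 ⊢ <;> omega
  have hcut : Cut2 A R₁ R₂ := by
    intro U hU
    have e3 : cutIn A U = cutIn B₁ U + cutIn B₂ U := by
      rw [← hpart]; exact cutIn_union hdisj U
    have c1 : (if (R₁ ∩ U).Nonempty then 0 else 1) ≤ cutIn B₁ U := by
      split_ifs with h
      · exact Nat.zero_le _
      · exact branching_cut h₁ hU (by rw [← hR₁def]; exact h)
    have c2 : (if (R₂ ∩ U).Nonempty then 0 else 1) ≤ cutIn B₂ U := by
      split_ifs with h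
      · exact Nat.zero_le _
      · exact branching_cut h₂ hU (by rw [← hR₂def]; exact h)
    omega
  set W : Finset V := Finset.univ.filter (fun w => Reaches A w s) with hWdef
  have hsW : s ∈ W := by
    simp only [hWdef, Finset.mem_filter, Finset.mem_univ, true_and]
    exact Relation.ReflTransGen.refl
  have hWclosed : Closed A W := by
    intro a ha haW
    simp only [hWdef, Finset.mem_filter, Finset.mem_univ, true_and] at haW ⊢
    exact Relation.ReflTransGen.head (show ((a.1, a.2) : V × V) ∈ A by rw [Prod.mk.eta]; exact ha) haW
  have hWsub : ∀ U : Finset V, Closed A U → s ∈ U → W ⊆ U := by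
    intro U hUc hsU w hwW
    simp only [hWdef, Finset.mem_filter, Finset.mem_univ, true_and] at hwW
    exact reach_closed hUc hsU hwW
  by_cases hcase : (R₁ ∩ W) ⊆ {s}
  · -- case 2 : need a swap vertex t
    have htex : (R₂ ∩ W).Nonempty := by
      by_contra h
      have hc := hcut W ⟨s, hsW⟩
      have h0 : cutIn A W = 0 := cutIn_eq_zero_iff.2 hWclosed
      rw [h0, if_neg h] at hc
      split_ifs at hc <;> omega
    obtain ⟨t, htRW⟩ := htex
    obtain ⟨htR₂, htW⟩ := Finset.mem_inter.1 htRW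
    have hts : t ≠ s := fun h => hsR₂ (h ▸ htR₂)
    have htR₁ : t ∉ R₁ := by
      intro h
      exact hts (Finset.mem_singleton.1 (hcase (Finset.mem_inter.2 ⟨h, htW⟩)))
    have hdeg2 : Deg2 A (insert t (R₁.erase s)) ((insert s R₂).erase t) := by
      intro v
      have hd := hdeg v
      by_cases hv1 : v = s
      · subst hv1
        rw [if_pos hsR₁, if_neg hsR₂] at hd
        rw [if_neg (by
            simp only [Finset.mem_insert, Finset.mem_erase, not_or]
            exact ⟨fun h => hts h.symm, fun h => h.1 rfl⟩),
          if_pos (Finset.mem_erase.2 ⟨fun h => hts h.symm, Finset.mem_insert_self _ _⟩)]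
        omega
      · by_cases hv2 : v = t
        · subst hv2
          rw [if_neg htR₁, if_pos htR₂] at hd
          rw [if_pos (Finset.mem_insert_self _ _), if_neg (Finset.notMem_erase _ _)]
          omega
        · have m1 : (v ∈ insert t (R₁.erase s)) ↔ v ∈ R₁ := by
            simp [Finset.mem_insert, Finset.mem_erase, hv1, hv2]
          have m2 : (v ∈ (insert s R₂).erase t) ↔ v ∈ R₂ := by
            simp [Finset.mem_insert, Finset.mem_erase, hv1, hv2]
          rw [if_congr m1 rfl rfl, if_congr m2 rfl rfl]
          exact hd
    have hsR₂' : s ∈ (insert s R₂).erase t :=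
      Finset.mem_erase.2 ⟨fun h => hts h.symm, Finset.mem_insert_self _ _⟩
    have hcut2 : Cut2 A (insert t (R₁.erase s)) ((insert s R₂).erase t) := by
      intro U hU
      have hold := hcut U hU
      by_cases hA1 : ((insert t (R₁.erase s)) ∩ U).Nonempty
      · rw [if_pos hA1]
        by_cases hA2 : (((insert s R₂).erase t) ∩ U).Nonempty
        · rw [if_pos hA2]; exact Nat.zero_le _
        · rw [if_neg hA2]
          have hsU : s ∉ U := fun h => hA2 ⟨s, Finset.mem_inter.2 ⟨hsR₂', h⟩⟩
          have hR2U : ∀ x ∈ R₂, x ∈ U → x = t := by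
            intro x hx hxU
            by_contra hxt
            exact hA2 ⟨x, Finset.mem_inter.2
              ⟨Finset.mem_erase.2 ⟨hxt, Finset.mem_insert_of_mem hx⟩, hxU⟩⟩
          by_contra hcon
          push_neg at hcon
          have hcl : Closed A U := cutIn_eq_zero_iff.1 (by omega)
          by_cases hR2 : (R₂ ∩ U).Nonempty
          · obtain ⟨x, hx⟩ := hR2
            obtain ⟨hx1, hx2⟩ := Finset.mem_inter.1 hx
            have hxt : x = t := hR2U x hx1 hx2
            subst hxt
            -- t ∈ U, U closed; W_x := reach-to-t set
            set Wt : Finset V := Finset.univ.filter (fun w => Reaches A w x) with hWtdef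
            have hWtclosed : Closed A Wt := by
              intro a ha haW
              simp only [hWtdef, Finset.mem_filter, Finset.mem_univ, true_and] at haW ⊢
              exact Relation.ReflTransGen.head
                (show ((a.1, a.2) : V × V) ∈ A by rw [Prod.mk.eta]; exact ha) haW
            have hxWt : x ∈ Wt := by
              simp only [hWtdef, Finset.mem_filter, Finset.mem_univ, true_and]
              exact Relation.ReflTransGen.refl
            have hWtU : Wt ⊆ U := by
              intro w hw
              simp only [hWtdef, Finset.mem_filter, Finset.mem_univ, true_and] at hw
              exact reach_closed hcl hx2 hw
            have hWtW : Wt ⊆ W := by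
              intro w hw
              simp only [hWtdef, Finset.mem_filter, Finset.mem_univ, true_and] at hw
              simp only [hWdef, Finset.mem_filter, Finset.mem_univ, true_and]
              have hxs : Reaches A x s := by
                have := htW
                simp only [hWdef, Finset.mem_filter, Finset.mem_univ, true_and] at this
                exact this
              exact hw.trans hxs
            have hcWt := hcut Wt ⟨x, hxWt⟩
            have h0 : cutIn A Wt = 0 := cutIn_eq_zero_iff.2 hWtclosed
            rw [h0] at hcWt
            have hR1Wt : (R₁ ∩ Wt).Nonempty := by
              by_contra h
              rw [if_neg h] at hcWt
              split_ifs at hcWt <;> omega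
            obtain ⟨z, hz⟩ := hR1Wt
            obtain ⟨hz1, hz2⟩ := Finset.mem_inter.1 hz
            have hzs : z = s := Finset.mem_singleton.1
              (hcase (Finset.mem_inter.2 ⟨hz1, hWtW hz2⟩))
            exact hsU (hWtU (hzs ▸ hz2))
          · rw [if_neg hR2] at hold
            split_ifs at hold <;> omega
      · rw [if_neg hA1]
        have htU : t ∉ U := fun h => hA1 ⟨t, Finset.mem_inter.2 ⟨Finset.mem_insert_self _ _, h⟩⟩
        have hR1U : ∀ x ∈ R₁, x ∈ U → x = s := by
          intro x hx hxU
          by_contra hxs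
          exact hA1 ⟨x, Finset.mem_inter.2
            ⟨Finset.mem_insert_of_mem (Finset.mem_erase.2 ⟨hxs, hx⟩), hxU⟩⟩
        by_cases hA2 : (((insert s R₂).erase t) ∩ U).Nonempty
        · rw [if_pos hA2]
          by_contra hcon
          push_neg at hcon
          have hcl : Closed A U := cutIn_eq_zero_iff.1 (by omega)
          by_cases hR1 : (R₁ ∩ U).Nonempty
          · obtain ⟨x, hx⟩ := hR1
            obtain ⟨hx1, hx2⟩ := Finset.mem_inter.1 hx
            have := hR1U x hx1 hx2
            subst this
            exact htU (hWsub U hcl hx2 htW)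
          · rw [if_neg hR1] at hold
            split_ifs at hold <;> omega
        · rw [if_neg hA2]
          have hsU : s ∉ U := fun h => hA2 ⟨s, Finset.mem_inter.2 ⟨hsR₂', h⟩⟩
          have hR1e : ¬ (R₁ ∩ U).Nonempty := by
            rintro ⟨x, hx⟩
            obtain ⟨hx1, hx2⟩ := Finset.mem_inter.1 hx
            exact hsU ((hR1U x hx1 hx2) ▸ hx2)
          have hR2e : ¬ (R₂ ∩ U).Nonempty := by
            rintro ⟨x, hx⟩
            obtain ⟨hx1, hx2⟩ := Finset.mem_inter.1 hx
            by_cases hxt : x = t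
            · exact htU (hxt ▸ hx2)
            · exact hA2 ⟨x, Finset.mem_inter.2
                ⟨Finset.mem_erase.2 ⟨hxt, Finset.mem_insert_of_mem hx1⟩, hx2⟩⟩
          rw [if_neg hR1e, if_neg hR2e] at hold
          omega
    obtain ⟨B₁', B₂', hb1, hb2, hun, hdj, hr1, hr2⟩ :=
      E2 A.card A (insert t (R₁.erase s)) ((insert s R₂).erase t) le_rfl hdeg2 hcut2
    refine ⟨B₁', B₂', hb1, hb2, hun, hdj, Or.inr ⟨t, Finset.mem_sdiff.2 ⟨htR₂, htR₁⟩, ?_, ?_⟩⟩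
    · rw [hr1, Finset.erase_eq]
      ext x
      simp only [Finset.mem_insert, Finset.mem_union, Finset.mem_sdiff, Finset.mem_singleton]
      tauto
    · rw [hr2, Finset.erase_eq, Finset.insert_eq]
      congr 1
      exact Finset.union_comm _ _
  · -- case 1 : plain move of s
    obtain ⟨r, hrRW, hrs⟩ := Finset.not_subset.1 hcase
    obtain ⟨hrR₁, hrW⟩ := Finset.mem_inter.1 hrRW
    rw [Finset.mem_singleton] at hrs
    have hdeg1 : Deg2 A (R₁.erase s) (insert s R₂) := by
      intro v
      have hd := hdeg v
      by_cases hv1 : v = s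
      · subst hv1
        rw [if_pos hsR₁, if_neg hsR₂] at hd
        rw [if_neg (Finset.notMem_erase _ _), if_pos (Finset.mem_insert_self _ _)]
        omega
      · have m1 : (v ∈ R₁.erase s) ↔ v ∈ R₁ := by simp [Finset.mem_erase, hv1]
        have m2 : (v ∈ insert s R₂) ↔ v ∈ R₂ := by simp [Finset.mem_insert, hv1]
        rw [if_congr m1 rfl rfl, if_congr m2 rfl rfl]
        exact hd
    have hcut1 : Cut2 A (R₁.erase s) (insert s R₂) := by
      intro U hU
      have hold := hcut U hU
      by_cases hA1 : ((R₁.erase s) ∩ U).Nonempty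
      · rw [if_pos hA1]
        by_cases hA2 : ((insert s R₂) ∩ U).Nonempty
        · rw [if_pos hA2]; exact Nat.zero_le _
        · rw [if_neg hA2]
          have hsU : s ∉ U := fun h => hA2 ⟨s, Finset.mem_inter.2 ⟨Finset.mem_insert_self _ _, h⟩⟩
          have hR2e : ¬ (R₂ ∩ U).Nonempty := by
            rintro ⟨x, hx⟩
            obtain ⟨hx1, hx2⟩ := Finset.mem_inter.1 hx
            exact hA2 ⟨x, Finset.mem_inter.2 ⟨Finset.mem_insert_of_mem hx1, hx2⟩⟩
          rw [if_neg hR2e] at hold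
          split_ifs at hold <;> omega
      · rw [if_neg hA1]
        have hR1U : ∀ x ∈ R₁, x ∈ U → x = s := by
          intro x hx hxU
          by_contra hxs
          exact hA1 ⟨x, Finset.mem_inter.2 ⟨Finset.mem_erase.2 ⟨hxs, hx⟩, hxU⟩⟩
        by_cases hA2 : ((insert s R₂) ∩ U).Nonempty
        · rw [if_pos hA2]
          by_contra hcon
          push_neg at hcon
          have hcl : Closed A U := cutIn_eq_zero_iff.1 (by omega)
          by_cases hR1 : (R₁ ∩ U).Nonempty
          · obtain ⟨x, hx⟩ := hR1
            obtain ⟨hx1, hx2⟩ := Finset.mem_inter.1 hx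
            have := hR1U x hx1 hx2
            subst this
            have : W ⊆ U := hWsub U hcl hx2
            exact hA1 ⟨r, Finset.mem_inter.2 ⟨Finset.mem_erase.2 ⟨hrs, hrR₁⟩, this hrW⟩⟩
          · rw [if_neg hR1] at hold
            split_ifs at hold <;> omega
        · rw [if_neg hA2]
          have hsU : s ∉ U := fun h => hA2 ⟨s, Finset.mem_inter.2 ⟨Finset.mem_insert_self _ _, h⟩⟩
          have hR1e : ¬ (R₁ ∩ U).Nonempty := by
            rintro ⟨x, hx⟩
            obtain ⟨hx1, hx2⟩ := Finset.mem_inter.1 hx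
            exact hsU ((hR1U x hx1 hx2) ▸ hx2)
          have hR2e : ¬ (R₂ ∩ U).Nonempty := by
            rintro ⟨x, hx⟩
            obtain ⟨hx1, hx2⟩ := Finset.mem_inter.1 hx
            exact hA2 ⟨x, Finset.mem_inter.2 ⟨Finset.mem_insert_of_mem hx1, hx2⟩⟩
          rw [if_neg hR1e, if_neg hR2e] at hold
          omega
    obtain ⟨B₁', B₂', hb1, hb2, hun, hdj, hr1, hr2⟩ :=
      E2 A.card A (R₁.erase s) (insert s R₂) le_rfl hdeg1 hcut1
    refine ⟨B₁', B₂', hb1, hb2, hun, hdj, Or.inl ⟨?_, ?_⟩⟩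
    · rw [hr1, Finset.erase_eq]
    · rw [hr2, Finset.insert_eq]
      exact Finset.union_comm _ _
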